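/- Let θ ∈ ℝ, U uniform on [0,1), K = ⌊θ/π + U⌉ mod 2, and Θ̂ = π(K - U). Then there exists an integer-valued random variable J such that Θ̂ = θ + π·U' - 2πJ where U' is uniform on [-1/2, 1/2); in particular, Θ̂ mod 2π has the same distribution as (θ + π U') mod 2π. -/

import Mathlib

open Real MeasureTheory

-- helper: map of add-left on a restricted volume
lemma map_addLeft_restrict (c : ℝ) (s : Set ℝ) :
    Measure.map (fun u => c + u) (volume.restrict s)
      = volume.restrict ((fun u => c + u) '' s) :=
  ((measurePreserving_add_left volume c).restrict_image_emb
    (MeasurableEquiv.addLeft c).measurableEmbedding s).map_eq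

lemma map_subLeft_restrict (c : ℝ) (s : Set ℝ) :
    Measure.map (fun u => c - u) (volume.restrict s)
      = volume.restrict ((fun u => c - u) '' s) :=
  ((Measure.measurePreserving_sub_left volume c).restrict_image_emb
    (MeasurableEquiv.subLeft c).measurableEmbedding s).map_eq

-- fract pushes restrict (Ico c (c+1)) to restrict (Ico 0 1)
lemma map_fract_restrict (c : ℝ) :
    Measure.map Int.fract (volume.restrict (Set.Ico c (c + 1)))
      = volume.restrict (Set.Ico (0 : ℝ) 1) := by
  set m : ℤ := ⌊c⌋ with hm
  have hc1 : (m : ℝ) ≤ c := Int.floor_le c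
  have hc2 : c < m + 1 := Int.lt_floor_add_one c
  have hsplit : Set.Ico c (c + 1) = Set.Ico c ((m : ℝ) + 1) ∪ Set.Ico ((m : ℝ) + 1) (c + 1) := by
    rw [Set.Ico_union_Ico_eq_Ico hc2.le (by linarith)]
  have hdisj : Disjoint (Set.Ico c ((m : ℝ) + 1)) (Set.Ico ((m : ℝ) + 1) (c + 1)) :=
    Set.Ico_disjoint_Ico_same
  rw [hsplit, Measure.restrict_union hdisj measurableSet_Ico, Measure.map_add _ _ measurable_fract]
  have h1 : Measure.map Int.fract (volume.restrict (Set.Ico c ((m : ℝ) + 1)))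
      = volume.restrict (Set.Ico (c - m) 1) := by
    have : Measure.map Int.fract (volume.restrict (Set.Ico c ((m : ℝ) + 1)))
        = Measure.map (fun x => (-(m : ℝ)) + x) (volume.restrict (Set.Ico c ((m : ℝ) + 1))) := by
      apply Measure.map_congr
      rw [Filter.EventuallyEq, ae_restrict_iff' measurableSet_Ico]
      filter_upwards with x hx
      rw [Int.fract]
      have : ⌊x⌋ = m := by
        rw [Int.floor_eq_iff]
        constructor
        · exact le_trans hc1 hx.1
        · exact_mod_cast hx.2
      rw [this]; ring
    rw [this, map_addLeft_restrict, Set.image_const_add_Ico]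
    congr 1
    rw [show -(m:ℝ) + c = c - m by ring, show -(m:ℝ) + ((m:ℝ)+1) = 1 by ring]
  have h2 : Measure.map Int.fract (volume.restrict (Set.Ico ((m : ℝ) + 1) (c + 1)))
      = volume.restrict (Set.Ico 0 (c - m)) := by
    have : Measure.map Int.fract (volume.restrict (Set.Ico ((m : ℝ) + 1) (c + 1)))
        = Measure.map (fun x => (-(m : ℝ) - 1) + x) (volume.restrict (Set.Ico ((m : ℝ) + 1) (c + 1))) := by
      apply Measure.map_congr
      rw [Filter.EventuallyEq, ae_restrict_iff' measurableSet_Ico]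
      filter_upwards with x hx
      rw [Int.fract]
      have : ⌊x⌋ = m + 1 := by
        rw [Int.floor_eq_iff]
        constructor
        · exact_mod_cast hx.1
        · push_cast; linarith [hx.2]
      rw [this]; push_cast; ring
    rw [this, map_addLeft_restrict, Set.image_const_add_Ico]
    congr 1
    rw [show -(m:ℝ) - 1 + ((m:ℝ)+1) = 0 by ring, show -(m:ℝ) - 1 + (c+1) = c - m by ring]
  rw [h1, h2, add_comm, ← Measure.restrict_union Set.Ico_disjoint_Ico_same measurableSet_Ico,
    Set.Ico_union_Ico_eq_Ico (by linarith [Int.fract_nonneg c]) (by linarith)]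

/-- Universal quantization adapted to the circle at 1 bit: with `U` uniform on `[0,1)`,
`K = ⌊θ/π + U⌉ mod 2` and `Θ̂ = π(K - U)`, there is an integer-valued `J` with
`Θ̂ = θ + π U' - 2π J` where `U' = ⌊θ/π + U⌉ - θ/π - U` is uniform on `[-1/2, 1/2)`;
in particular `Θ̂ mod 2π` has the same distribution as `(θ + π U') mod 2π`. -/
theorem stmt_18 (θ : ℝ) :
    ∃ (J : ℝ → ℤ) (U' : ℝ → ℝ),
      (∀ u ∈ Set.Ico (0 : ℝ) 1,
        π * (((round (θ / π + u) % 2 : ℤ) : ℝ) - u)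
          = θ + π * U' u - 2 * π * (J u : ℝ)) ∧
      Measure.map U' (volume.restrict (Set.Ico (0 : ℝ) 1))
        = volume.restrict (Set.Ico (-(1 / 2) : ℝ) (1 / 2)) ∧
      Measure.map
          (fun u : ℝ => ((π * (((round (θ / π + u) % 2 : ℤ) : ℝ) - u) : ℝ) :
              AddCircle (2 * π)))
          (volume.restrict (Set.Ico (0 : ℝ) 1))
        = Measure.map (fun u' : ℝ => ((θ + π * u' : ℝ) : AddCircle (2 * π)))
            (volume.restrict (Set.Ico (-(1 / 2) : ℝ) (1 / 2))) := by
  have hπ : (π : ℝ) ≠ 0 := Real.pi_ne_zero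
  set a := θ / π with ha
  set U' : ℝ → ℝ := fun u => (round (a + u) : ℝ) - a - u with hU'def
  set J : ℝ → ℤ := fun u => round (a + u) / 2 with hJdef
  have hU'eq : U' = (fun y => 1/2 - y) ∘ Int.fract ∘ (fun u => (a + 1/2) + u) := by
    funext u
    simp only [hU'def, Function.comp_apply, round_eq, Int.fract]
    rw [show a + u + 1/2 = a + 1/2 + u by ring]
    ring
  have hmeasU' : Measurable U' := by
    rw [hU'eq]
    exact (measurable_const.sub measurable_id).comp (measurable_fract.comp (by fun_prop))
  have h1 : ∀ u ∈ Set.Ico (0 : ℝ) 1,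
      π * (((round (a + u) % 2 : ℤ) : ℝ) - u) = θ + π * U' u - 2 * π * (J u : ℝ) := by
    intro u hu
    have hmod : ((round (a + u) % 2 : ℤ) : ℝ)
        = (round (a + u) : ℝ) - 2 * ((round (a + u) / 2 : ℤ) : ℝ) := by
      push_cast [Int.emod_def]; ring
    rw [hmod]
    have hθ : π * a = θ := by rw [ha, mul_comm, div_mul_cancel₀ θ hπ]
    simp only [hU'def, hJdef]
    nlinarith [hθ]
  have h2 : Measure.map U' (volume.restrict (Set.Ico (0 : ℝ) 1))
      = volume.restrict (Set.Ico (-(1 / 2) : ℝ) (1 / 2)) := by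
    rw [hU'eq,
      ← Measure.map_map (by fun_prop) (measurable_fract.comp (by fun_prop)),
      ← Measure.map_map measurable_fract (by fun_prop : Measurable (fun u : ℝ => (a + 1/2) + u)),
      map_addLeft_restrict, Set.image_const_add_Ico, add_zero,
      map_fract_restrict, map_subLeft_restrict, Set.image_const_sub_Ico]
    rw [show (1:ℝ)/2 - 1 = -(1/2) by ring, show (1:ℝ)/2 - 0 = 1/2 by ring]
    exact Measure.restrict_congr_set MeasureTheory.Ico_ae_eq_Ioc.symm
  refine ⟨J, U', h1, h2, ?_⟩
  have hcongr : (fun u : ℝ => ((π * (((round (a + u) % 2 : ℤ) : ℝ) - u) : ℝ) :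
        AddCircle (2 * π)))
      =ᵐ[volume.restrict (Set.Ico (0 : ℝ) 1)]
      (fun u : ℝ => ((θ + π * U' u : ℝ) : AddCircle (2 * π))) := by
    rw [Filter.EventuallyEq, ae_restrict_iff' measurableSet_Ico]
    filter_upwards with u hu
    rw [h1 u hu]
    have hz : ((2 * π * ((J u : ℤ) : ℝ) : ℝ) : AddCircle (2 * π)) = 0 := by
      refine (AddCircle.coe_eq_zero_iff _).mpr ⟨J u, ?_⟩
      rw [zsmul_eq_mul]; ring
    have : ((θ + π * U' u - 2 * π * ((J u : ℤ) : ℝ) : ℝ) : AddCircle (2 * π))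
        = ((θ + π * U' u : ℝ) : AddCircle (2 * π))
          - ((2 * π * ((J u : ℤ) : ℝ) : ℝ) : AddCircle (2 * π)) := rfl
    rw [this, hz, sub_zero]
  have hg : Measurable (fun u' : ℝ => ((θ + π * u' : ℝ) : AddCircle (2 * π))) :=
    Continuous.measurable (continuous_quotient_mk'.comp (by continuity))
  rw [Measure.map_congr hcongr,
    show (fun u : ℝ => ((θ + π * U' u : ℝ) : AddCircle (2 * π)))
      = (fun u' : ℝ => ((θ + π * u' : ℝ) : AddCircle (2 * π))) ∘ U' from rfl,
    ← Measure.map_map hg hmeasU', h2]
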